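/- Suppose AΠ_k + BH_k = Π_kΛ_k, CΠ_k + DH_k = 0, BR₀ = Π_kα_k, DR₀ = 0, R₀*R₀ = I, β_k = −α_k*σ − R₀*H_k with σ solving the associated Riccati equation, and [R₀, L₀] is unitary. Then F(z)·L_β(z) = DL₀ + C(zI−A)^{-1}(B + Π_kσ^{-1}H_k*)L₀, where F(z) = D + C(zI−A)^{-1}B and L_β(z) = L₀ − (H_k+R₀β_k)(zI−(Λ_k+α_kβ_k))^{-1}σ^{-1}H_k*L₀. -/

import Mathlib

open Matrix

noncomputable section

/-- Map a complex matrix entrywise to rational functions. -/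
def mc {a b : ℕ} (M : Matrix (Fin a) (Fin b) ℂ) : Matrix (Fin a) (Fin b) (RatFunc ℂ) :=
  M.map (⇑(RatFunc.C : ℂ →+* RatFunc ℂ))

/-- The resolvent `(z I − M)⁻¹` as a matrix of rational functions. -/
def res {a : ℕ} (M : Matrix (Fin a) (Fin a) ℂ) : Matrix (Fin a) (Fin a) (RatFunc ℂ) :=
  ((Matrix.scalar (Fin a) (RatFunc.X : RatFunc ℂ)) - mc M)⁻¹

/-- The "anti-resolvent" `(z I + M)⁻¹`, used for para-hermitian conjugates. -/
def resneg {a : ℕ} (M : Matrix (Fin a) (Fin a) ℂ) : Matrix (Fin a) (Fin a) (RatFunc ℂ) :=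
  ((Matrix.scalar (Fin a) (RatFunc.X : RatFunc ℂ)) + mc M)⁻¹

/-- Observability of a pair `(C, A)`. -/
def Observable {p n : ℕ} (C : Matrix (Fin p) (Fin n) ℂ) (A : Matrix (Fin n) (Fin n) ℂ) : Prop :=
  ∀ v : Fin n → ℂ, (∀ k : ℕ, C *ᵥ ((A ^ k) *ᵥ v) = 0) → v = 0

/-- Controllability of a pair `(Λ, G)`. -/
def Controllable {r m : ℕ} (L : Matrix (Fin r) (Fin r) ℂ) (G : Matrix (Fin r) (Fin m) ℂ) : Prop :=
  ∀ y : Fin r → ℂ, (∀ k : ℕ, y ᵥ* ((L ^ k) * G) = 0) → y = 0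

/-- The range (column space) of a matrix, as a submodule of `ℂⁿ`. -/
def mrange {a b : ℕ} (M : Matrix (Fin a) (Fin b) ℂ) : Submodule ℂ (Fin a → ℂ) :=
  LinearMap.range M.mulVecLin

/-- The set of states reachable from the origin by a finite input sequence
producing identically zero output along the way (the minimal input-containing
subspace `C*(Σ)`). -/
def OutNullReach {n p q : ℕ} (A : Matrix (Fin n) (Fin n) ℂ) (B : Matrix (Fin n) (Fin q) ℂ)
    (C : Matrix (Fin p) (Fin n) ℂ) (D : Matrix (Fin p) (Fin q) ℂ) (x : Fin n → ℂ) : Prop :=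
  ∃ (j : ℕ) (ξ : ℕ → (Fin n → ℂ)) (u : ℕ → (Fin q → ℂ)),
    ξ 0 = 0 ∧ (∀ i < j, ξ (i + 1) = A *ᵥ ξ i + B *ᵥ u i ∧ C *ᵥ ξ i + D *ᵥ u i = 0) ∧ ξ j = x


lemma mc_mul {a b c : ℕ} (M : Matrix (Fin a) (Fin b) ℂ) (N : Matrix (Fin b) (Fin c) ℂ) :
    mc (M * N) = mc M * mc N := Matrix.map_mul

lemma mc_add {a b : ℕ} (M N : Matrix (Fin a) (Fin b) ℂ) : mc (M + N) = mc M + mc N := by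
  ext i j; simp [mc]

lemma mc_sub {a b : ℕ} (M N : Matrix (Fin a) (Fin b) ℂ) : mc (M - N) = mc M - mc N := by
  ext i j; simp [mc]

lemma mc_neg {a b : ℕ} (M : Matrix (Fin a) (Fin b) ℂ) : mc (-M) = -mc M := by
  ext i j; simp [mc]

lemma scalar_comm {a b : ℕ} (x : RatFunc ℂ) (P : Matrix (Fin a) (Fin b) (RatFunc ℂ)) :
    (Matrix.scalar (Fin a) x) * P = P * (Matrix.scalar (Fin b) x) := by
  ext i j; simp [Matrix.scalar_apply, Matrix.diagonal_mul, Matrix.mul_diagonal, mul_comm]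

lemma zsub_eq {a : ℕ} (M : Matrix (Fin a) (Fin a) ℂ) :
    (Matrix.scalar (Fin a) (RatFunc.X : RatFunc ℂ)) - mc M
      = (Matrix.charmatrix M).map (algebraMap (Polynomial ℂ) (RatFunc ℂ)) := by
  ext i j
  by_cases h : i = j <;>
    simp [h, mc, Matrix.charmatrix, Matrix.scalar_apply, Matrix.diagonal_apply, Matrix.one_apply,
      RatFunc.algebraMap_X, RatFunc.algebraMap_C]

lemma zsub_det_isUnit {a : ℕ} (M : Matrix (Fin a) (Fin a) ℂ) :
    IsUnit ((Matrix.scalar (Fin a) (RatFunc.X : RatFunc ℂ)) - mc M).det := by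
  rw [zsub_eq, ← RingHom.mapMatrix_apply, ← (algebraMap (Polynomial ℂ) (RatFunc ℂ)).map_det,
    isUnit_iff_ne_zero]
  intro h
  have h0 : M.charmatrix.det = 0 := by
    apply RatFunc.algebraMap_injective
    simpa using h
  exact M.charpoly_monic.ne_zero (by rwa [Matrix.charpoly] at *)

lemma res_mul_zsub {a : ℕ} (M : Matrix (Fin a) (Fin a) ℂ) :
    res M * ((Matrix.scalar (Fin a) (RatFunc.X : RatFunc ℂ)) - mc M) = 1 :=
  Matrix.nonsing_inv_mul _ (zsub_det_isUnit M)

lemma zsub_mul_res {a : ℕ} (M : Matrix (Fin a) (Fin a) ℂ) :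
    ((Matrix.scalar (Fin a) (RatFunc.X : RatFunc ℂ)) - mc M) * res M = 1 :=
  Matrix.mul_nonsing_inv _ (zsub_det_isUnit M)

set_option maxHeartbeats 1600000

/-- the realization of the product `F · L_β`. -/
theorem stmt18 {n p q rk m sL : ℕ}
    (A : Matrix (Fin n) (Fin n) ℂ) (B : Matrix (Fin n) (Fin q) ℂ)
    (C : Matrix (Fin p) (Fin n) ℂ) (D : Matrix (Fin p) (Fin q) ℂ)
    (Pk : Matrix (Fin n) (Fin rk) ℂ) (Hk : Matrix (Fin q) (Fin rk) ℂ)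
    (Λk : Matrix (Fin rk) (Fin rk) ℂ) (αk : Matrix (Fin rk) (Fin m) ℂ)
    (R₀ : Matrix (Fin q) (Fin m) ℂ) (L₀ : Matrix (Fin q) (Fin sL) ℂ)
    (σ : Matrix (Fin rk) (Fin rk) ℂ) (βk : Matrix (Fin m) (Fin rk) ℂ)
    (h1 : A * Pk + B * Hk = Pk * Λk) (h2 : C * Pk + D * Hk = 0)
    (hBR : B * R₀ = Pk * αk) (hDR : D * R₀ = 0)
    (hR : R₀ᴴ * R₀ = 1)
    (hσher : σ.IsHermitian) (hσinv : IsUnit σ.det)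
    (hric : σ * (Λk - αk * R₀ᴴ * Hk) + (Λk - αk * R₀ᴴ * Hk)ᴴ * σ
        - σ * αk * αkᴴ * σ + Hkᴴ * (1 - R₀ * R₀ᴴ) * Hk = 0)
    (hβ : βk = -(αkᴴ * σ) - R₀ᴴ * Hk)
    (hU1 : (fromCols R₀ L₀)ᴴ * fromCols R₀ L₀ = 1)
    (hU2 : fromCols R₀ L₀ * (fromCols R₀ L₀)ᴴ = 1) :
    (mc D + mc C * res A * mc B) *
        (mc L₀ - mc (Hk + R₀ * βk) * res (Λk + αk * βk) * mc (σ⁻¹ * Hkᴴ * L₀))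
      = mc (D * L₀) + mc C * res A * mc ((B + Pk * σ⁻¹ * Hkᴴ) * L₀) := by
  set X : RatFunc ℂ := RatFunc.X with hX
  set ZA := (Matrix.scalar (Fin n) X) - mc A with hZA
  set ZL := (Matrix.scalar (Fin rk) X) - mc (Λk + αk * βk) with hZL
  set S := mc (σ⁻¹ * Hkᴴ * L₀) with hS
  have hGc : B * (Hk + R₀ * βk) = Pk * (Λk + αk * βk) - A * Pk := by
    rw [Matrix.mul_add, ← Matrix.mul_assoc, hBR, Matrix.mul_assoc, Matrix.mul_add]
    rw [eq_sub_iff_add_eq, ← h1]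
    abel
  have hDGc : D * (Hk + R₀ * βk) = -(C * Pk) := by
    rw [Matrix.mul_add, ← Matrix.mul_assoc, hDR, Matrix.zero_mul, add_zero,
      eq_neg_of_add_eq_zero_right h2]
  have hG : mc B * mc (Hk + R₀ * βk) = ZA * mc Pk - mc Pk * ZL := by
    rw [hZA, hZL, Matrix.sub_mul, Matrix.mul_sub, _root_.scalar_comm,
      ← mc_mul, ← mc_mul, ← mc_mul, hGc, mc_sub]
    abel
  have e1 : mc D * mc (Hk + R₀ * βk) = -(mc C * mc Pk) := by
    rw [← mc_mul, hDGc, mc_neg, mc_mul]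
  have k1 : (mc D + mc C * res A * mc B) * mc (Hk + R₀ * βk)
      = -(mc C * res A * mc Pk * ZL) := by
    rw [Matrix.add_mul, e1, Matrix.mul_assoc (mc C * res A) (mc B), hG, Matrix.mul_sub,
      ← Matrix.mul_assoc (mc C * res A) ZA (mc Pk), Matrix.mul_assoc (mc C) (res A) ZA,
      res_mul_zsub, Matrix.mul_one, ← Matrix.mul_assoc (mc C * res A) (mc Pk) ZL]
    abel
  have k2 : (mc D + mc C * res A * mc B) * (mc (Hk + R₀ * βk) * res (Λk + αk * βk) * S)
      = -(mc C * res A * mc Pk * S) := by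
    rw [← Matrix.mul_assoc _ (mc (Hk + R₀ * βk) * res (Λk + αk * βk)) S,
      ← Matrix.mul_assoc _ (mc (Hk + R₀ * βk)) (res (Λk + αk * βk)), k1, Matrix.neg_mul,
      Matrix.mul_assoc (mc C * res A * mc Pk) ZL (res (Λk + αk * βk)), hZL, zsub_mul_res,
      Matrix.mul_one, Matrix.neg_mul]
  rw [Matrix.mul_sub, k2, sub_neg_eq_add]
  simp only [mc_mul, mc_add, Matrix.add_mul, Matrix.mul_add, Matrix.mul_assoc]
  rw [hS, mc_mul, mc_mul, Matrix.mul_assoc]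
  abel
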